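/- With the notation below, the partial derivatives of F with respect to the second-order variables r, s, t satisfy the identity F_r · F_t − (1/4) · F_s² = −1/4 at every (r,s,t) ∈ ℝ³; in particular the vanishing-E₁ graph equation in the Heisenberg group is a second-order hyperbolic equation (its linearization is hyperbolic). -/

import Mathlib

/-- Derivative of a generic function of the shape appearing in each slot of `F`. -/
lemma aux_deriv (a b k c z : ℝ) :
    HasDerivAt (fun w : ℝ => a * w + b - (1 / 6) * (k * w + c) ^ 2)
      (a - (1 / 3) * k * (k * z + c)) z := by
  have h1 : HasDerivAt (fun w : ℝ => k * w + c) k z := by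
    simpa using ((hasDerivAt_id z).const_mul k).add_const c
  have h2 : HasDerivAt (fun w : ℝ => a * w + b) a z := by
    simpa using ((hasDerivAt_id z).const_mul a).add_const b
  have h3 := (h1.pow 2).const_mul (1 / 6)
  have := h2.sub h3
  exact this.congr_deriv (by norm_num; ring)

/-- For the vanishing-E₁ graph equation in the Heisenberg group,
written as `F(r,s,t) = 0` in the second-derivative variables `(r,s,t)`, one has
`F_r · F_t − (1/4)·F_s² = −1/4` at every point, so the equation is hyperbolic. -/
theorem stmt_0 (x y p q D cθ sθ : ℝ)
    (hD : D = Real.sqrt ((p - y) ^ 2 + (q + x) ^ 2)) (hDpos : 0 < D)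
    (hc : cθ = (p - y) / D) (hs : sθ = (q + x) / D)
    (F : ℝ → ℝ → ℝ → ℝ)
    (hF : ∀ r s t : ℝ, F r s t =
      sθ * (cθ * r + sθ * (s + 1)) - cθ * (cθ * (s - 1) + sθ * t)
        - (1 / 6) * (sθ ^ 2 * r - 2 * sθ * cθ * s + cθ ^ 2 * t) ^ 2 - 1 / 2) :
    ∀ r s t : ℝ,
      deriv (fun r' => F r' s t) r * deriv (fun t' => F r s t') t
        - (1 / 4) * (deriv (fun s' => F r s' t) s) ^ 2 = -(1 / 4) := by
  have hD2 : D ^ 2 = (p - y) ^ 2 + (q + x) ^ 2 := by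
    rw [hD]; exact Real.sq_sqrt (by positivity)
  have h1 : cθ ^ 2 + sθ ^ 2 = 1 := by
    rw [hc, hs, div_pow, div_pow, ← add_div,
      div_eq_one_iff_eq (pow_ne_zero 2 hDpos.ne')]
    linarith
  intro r s t
  have hr : deriv (fun r' => F r' s t) r
      = sθ * cθ - (1 / 3) * sθ ^ 2 * (sθ ^ 2 * r - 2 * sθ * cθ * s + cθ ^ 2 * t) := by
    have heq : (fun r' => F r' s t) =
        fun w => (sθ * cθ) * w + (sθ ^ 2 * (s + 1) - cθ ^ 2 * (s - 1) - cθ * sθ * t - 1 / 2)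
          - (1 / 6) * (sθ ^ 2 * w + (-2 * sθ * cθ * s + cθ ^ 2 * t)) ^ 2 :=
      funext fun w => by rw [hF]; ring
    rw [heq, (aux_deriv _ _ _ _ r).deriv]; ring
  have ht : deriv (fun t' => F r s t') t
      = -(cθ * sθ) - (1 / 3) * cθ ^ 2 * (sθ ^ 2 * r - 2 * sθ * cθ * s + cθ ^ 2 * t) := by
    have heq : (fun t' => F r s t') =
        fun w => (-(cθ * sθ)) * w + (sθ * cθ * r + sθ ^ 2 * (s + 1) - cθ ^ 2 * (s - 1) - 1 / 2)
          - (1 / 6) * (cθ ^ 2 * w + (sθ ^ 2 * r - 2 * sθ * cθ * s)) ^ 2 :=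
      funext fun w => by rw [hF]; ring
    rw [heq, (aux_deriv _ _ _ _ t).deriv]; ring
  have hsd : deriv (fun s' => F r s' t) s
      = (sθ ^ 2 - cθ ^ 2) + (2 / 3) * sθ * cθ * (sθ ^ 2 * r - 2 * sθ * cθ * s + cθ ^ 2 * t) := by
    have heq : (fun s' => F r s' t) =
        fun w => (sθ ^ 2 - cθ ^ 2) * w + (sθ * cθ * r + sθ ^ 2 + cθ ^ 2 - cθ * sθ * t - 1 / 2)
          - (1 / 6) * ((-2 * sθ * cθ) * w + (sθ ^ 2 * r + cθ ^ 2 * t)) ^ 2 :=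
      funext fun w => by rw [hF]; ring
    rw [heq, (aux_deriv _ _ _ _ s).deriv]; ring
  rw [hr, ht, hsd]
  linear_combination (-(1 / 4) * (cθ ^ 2 + sθ ^ 2 + 1)) * h1
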